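/- Let S = {x ∈ ℝⁿ : u ≤ x ≤ v, Ax = b} be nonempty, let x* minimize cᵀx over S, and for t > 0 let x̂_t be the minimizer of ½‖x + t c‖² over S. Then cᵀ(x̂_t − x*) ≤ 4 R r / t, where R = max_{x ∈ S} ‖x‖ and r is the radius (diameter bound) of S, i.e., ‖x − x'‖ ≤ 2r for all x, x' ∈ S. -/

import Mathlib

open scoped RealInnerProductSpace

theorem lp_projection_bound (n m : ℕ)
    (u v c : EuclideanSpace ℝ (Fin n)) (huv : ∀ i, u i ≤ v i)
    (A : Matrix (Fin m) (Fin n) ℝ) (b : Fin m → ℝ)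
    (S : Set (EuclideanSpace ℝ (Fin n)))
    (hS : S = {x : EuclideanSpace ℝ (Fin n) | (∀ i, u i ≤ x i ∧ x i ≤ v i) ∧ A.mulVec (WithLp.ofLp x) = b})
    (hne : S.Nonempty)
    (R r : ℝ) (hR : ∀ x ∈ S, ‖x‖ ≤ R) (hr : ∀ x ∈ S, ∀ x' ∈ S, ‖x - x'‖ ≤ 2 * r)
    (xstar : EuclideanSpace ℝ (Fin n)) (hxstar : xstar ∈ S)
    (hmin : ∀ x ∈ S, ⟪c, xstar⟫ ≤ ⟪c, x⟫)
    (t : ℝ) (ht : 0 < t)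
    (xhat : EuclideanSpace ℝ (Fin n)) (hxhat : xhat ∈ S)
    (hproj : ∀ x ∈ S, (1/2) * ‖xhat + t • c‖^2 ≤ (1/2) * ‖x + t • c‖^2) :
    ⟪c, xhat - xstar⟫ ≤ 4 * R * r / t := by
  have h := hproj xstar hxstar
  have e1 : ‖xhat + t • c‖^2 = ‖xhat‖^2 + 2*(t*⟪c,xhat⟫) + ‖t • c‖^2 := by
    rw [norm_add_sq_real, real_inner_smul_right, real_inner_comm]
  have e2 : ‖xstar + t • c‖^2 = ‖xstar‖^2 + 2*(t*⟪c,xstar⟫) + ‖t • c‖^2 := by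
    rw [norm_add_sq_real, real_inner_smul_right, real_inner_comm]
  have key : ‖xhat‖^2 + 2*(t*⟪c,xhat⟫) ≤ ‖xstar‖^2 + 2*(t*⟪c,xstar⟫) := by
    rw [e1, e2] at h; linarith
  have hd : ‖xhat - xstar‖ ≤ 2*r := hr _ hxhat _ hxstar
  have hn : ‖xstar‖ - ‖xhat‖ ≤ ‖xhat - xstar‖ := by
    rw [norm_sub_rev]; exact norm_sub_norm_le _ _
  have hR1 : ‖xstar‖ ≤ R := hR _ hxstar
  have hR2 : ‖xhat‖ ≤ R := hR _ hxhat
  have hr0 : (0:ℝ) ≤ r := by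
    have := hr xhat hxhat xhat hxhat
    have h0 : (0:ℝ) ≤ ‖xhat - xhat‖ := norm_nonneg _
    linarith
  have hR0 : (0:ℝ) ≤ R := le_trans (norm_nonneg _) hR2
  have hinner : ⟪c, xhat - xstar⟫ = ⟪c,xhat⟫ - ⟪c,xstar⟫ := inner_sub_right _ _ _
  rw [hinner, le_div_iff₀ ht]
  nlinarith [norm_nonneg xhat, norm_nonneg xstar, mul_le_mul hn hd (norm_nonneg _) (norm_nonneg _), mul_nonneg hR0 hr0, sq_nonneg (‖xstar‖-‖xhat‖)]
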